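/- Let Y be a finite set with a distinguished element †, let N ≥ 1, and let g_1,…,g_N : Y → Y be functions each satisfying g_j(†) = †. Define subsets Ψ_m ⊆ Y inductively by Ψ_0 = {†} and Ψ_{m+1} = {†} ∪ {y ∈ Y : g_j(y) ∈ Ψ_m for all j = 1,…,N}. Then the following are equivalent: (a) there exists a positive integer M such that every M-fold composition g_{j_1} ∘ ⋯ ∘ g_{j_M} (arbitrary indices j_t ∈ {1,…,N}) has range equal to {†}; (b) ∪_{m≥0} Ψ_m = Y. -/
import Mathlib


def PsiSet {Y ι : Type*} (dag : Y) (g : ι → Y → Y) : ℕ → Set Y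
  | 0 => {dag}
  | m + 1 => {dag} ∪ {y | ∀ j, g j y ∈ PsiSet dag g m}

private lemma fold_append {Y ι : Type*} (g : ι → Y → Y) (l : List ι) (a : ι) (y : Y) :
    (l ++ [a]).foldr (fun j G => g j ∘ G) id y
      = l.foldr (fun j G => g j ∘ G) id (g a y) := by
  induction l with
  | nil => rfl
  | cons b l ih => simp_all

private lemma fold_dag {Y ι : Type*} (dag : Y) (g : ι → Y → Y) (hg : ∀ j, g j dag = dag)
    (l : List ι) : l.foldr (fun j G => g j ∘ G) id dag = dag := by
  induction l with
  | nil => rfl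
  | cons b l ih => simp_all

private lemma psi_iff {Y ι : Type*} (dag : Y) (g : ι → Y → Y) (hg : ∀ j, g j dag = dag)
    (m : ℕ) (y : Y) :
    y ∈ PsiSet dag g m ↔
      ∀ l : List ι, l.length = m → l.foldr (fun j G => g j ∘ G) id y = dag := by
  induction m generalizing y with
  | zero =>
    constructor
    · rintro rfl l hl
      rw [List.length_eq_zero_iff] at hl
      subst hl; rfl
    · intro h; exact h [] rfl
  | succ m ih =>
    constructor
    · rintro (rfl | h) l hl
      · exact fold_dag _ g hg l
      · rcases List.eq_nil_or_concat l with rfl | ⟨l', a, rfl⟩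
        · simp at hl
        · rw [List.concat_eq_append, fold_append]
          exact (ih (g a y)).1 (h a) l' (by simpa using hl)
    · intro h
      right
      intro j
      rw [ih]
      intro l hl
      have := h (l ++ [j]) (by simp [hl])
      rwa [fold_append] at this

private lemma psi_mono {Y ι : Type*} (dag : Y) (g : ι → Y → Y) (hg : ∀ j, g j dag = dag) :
    Monotone (PsiSet dag g) := by
  apply monotone_nat_of_le_succ
  intro m y hy
  rw [psi_iff dag g hg] at hy ⊢
  intro l hl
  match l with
  | [] => simp at hl
  | a :: l' =>
    have : l'.foldr (fun j G => g j ∘ G) id y = dag := hy l' (by simpa using hl)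
    simp only [List.foldr_cons, Function.comp_apply, this, hg]

theorem stmt_4 {Y : Type*} [Finite Y] (dag : Y) {N : ℕ} (hN : 1 ≤ N)
    (g : Fin N → Y → Y) (hg : ∀ j, g j dag = dag) :
    (∃ M : ℕ, 0 < M ∧ ∀ l : List (Fin N), l.length = M →
      ∀ y : Y, l.foldr (fun j G => g j ∘ G) id y = dag) ↔
    (⋃ m, PsiSet dag g m) = Set.univ := by
  constructor
  · rintro ⟨M, _, h⟩
    ext y
    simp only [Set.mem_iUnion, Set.mem_univ, iff_true]
    exact ⟨M, (psi_iff dag g hg M y).2 fun l hl => h l hl y⟩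
  · intro h
    have hmem : ∀ y : Y, ∃ m, y ∈ PsiSet dag g m := fun y =>
      Set.mem_iUnion.1 (h ▸ Set.mem_univ y)
    choose m hm using hmem
    have : Nonempty Y := ⟨dag⟩
    obtain ⟨x, hx⟩ := Finite.exists_max m
    refine ⟨m x + 1, Nat.succ_pos _, fun l hl y => ?_⟩
    have hy : y ∈ PsiSet dag g (m x + 1) :=
      psi_mono dag g hg (Nat.le_succ_of_le (hx y)) (hm y)
    exact (psi_iff dag g hg _ y).1 hy l hl
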